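/- In the single-step noise setting below with the LSE operator, let Q : S×A → ℝ satisfy ‖Q‖_∞ ≤ (1/(1−γ))·(1 + γ·log(|A|)/β), and let W := ∑_{(s,a,s')∈S×A×S} d(s,a)·P(s'|s,a)·w(s,a,s')·w(s,a,s')ᵀ be the second-moment matrix of the noise. Then for every x ∈ ℝ^{S×A}, xᵀ·W·x ≤ (6·(log(|A|) + β)²/(β²·(1−γ)²))·‖x‖₂²; equivalently, the maximum eigenvalue of W is at most 6·(log(|A|)+β)²/(β²·(1−γ)²). -/

import Mathlib

set_option maxHeartbeats 1000000 in
/-- **Second-moment bound of the LSE noise.** If `‖Q‖_∞ ≤ (1/(1−γ))·(1 + γ·log|A|/β)`,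
then the second-moment matrix `W = E[w wᵀ]` of the single-step LSE noise satisfies
`xᵀ W x ≤ (6·(log|A|+β)²/(β²·(1−γ)²))·‖x‖₂²` for every `x`, i.e. its maximum
eigenvalue is at most `6·(log|A|+β)²/(β²·(1−γ)²)`. -/
theorem lse_noise_second_moment_bound {S A : Type*} [Fintype S] [Fintype A]
    [Nonempty S] [Nonempty A] [DecidableEq S] [DecidableEq A]
    (γ β : ℝ) (hγ : γ ∈ Set.Ico (0 : ℝ) 1) (hβ : 0 < β)
    (d : S → A → ℝ) (hd0 : ∀ s a, 0 ≤ d s a) (hd1 : ∑ p : S × A, d p.1 p.2 = 1)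
    (P : S → A → S → ℝ) (hP0 : ∀ s a s', 0 ≤ P s a s') (hP1 : ∀ s a, ∑ s', P s a s' = 1)
    (r : S → A → S → ℝ) (hr : ∀ s a s', |r s a s'| ≤ 1)
    (Q : S → A → ℝ)
    (hQ : ∀ s a, |Q s a| ≤ (1 / (1 - γ)) * (1 + γ * Real.log (Fintype.card A) / β))
    (w : S → A → S → S → A → ℝ)
    (hw : ∀ s a s' u b, w s a s' u b =
      (if (u, b) = (s, a) then (1 : ℝ) else 0) *
        (r s a s' + γ * ((1 / β) * Real.log (∑ c, Real.exp (β * Q s' c))) - Q s a)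
      - d u b * ((∑ s'', P u b s'' * r u b s'')
          + γ * ∑ s'', P u b s'' * ((1 / β) * Real.log (∑ c, Real.exp (β * Q s'' c)))
          - Q u b)) :
    ∀ x : S × A → ℝ,
      (∑ s, ∑ a, ∑ s', d s a * P s a s' * (∑ p : S × A, x p * w s a s' p.1 p.2) ^ 2) ≤
        (6 * (Real.log (Fintype.card A) + β) ^ 2 / (β ^ 2 * (1 - γ) ^ 2)) *
          ∑ p : S × A, (x p) ^ 2 := by
  obtain ⟨hγ0, hγ1⟩ := hγ
  have h1γ : (0:ℝ) < 1 - γ := by linarith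
  intro x
  set L := Real.log (Fintype.card A) with hLdef
  have hL0 : 0 ≤ L := Real.log_nonneg (by exact_mod_cast Fintype.card_pos)
  set M := (1 / (1 - γ)) * (1 + γ * L / β) with hMdef
  have hM0 : 0 ≤ M := by
    rw [hMdef]; positivity
  set B := 2 * (L + β) / (β * (1 - γ)) with hBdef
  -- bound on the soft-max term
  have hhb : ∀ s', |(1 / β) * Real.log (∑ c, Real.exp (β * Q s' c))| ≤ M + L / β := by
    intro s'
    have hpos : (0:ℝ) < ∑ c, Real.exp (β * Q s' c) :=
      Finset.sum_pos (fun c _ => Real.exp_pos _) Finset.univ_nonempty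
    have hLβ0 : 0 ≤ L / β := div_nonneg hL0 hβ.le
    rw [abs_le]
    constructor
    · obtain ⟨a0⟩ := ‹Nonempty A›
      have h1 : Real.exp (β * (-M)) ≤ ∑ c, Real.exp (β * Q s' c) := by
        refine le_trans ?_ (Finset.single_le_sum (f := fun c => Real.exp (β * Q s' c))
          (fun c _ => (Real.exp_pos _).le) (Finset.mem_univ a0))
        apply Real.exp_le_exp.mpr
        have := (abs_le.mp (hQ s' a0)).1
        nlinarith
      have h2 : β * (-M) ≤ Real.log (∑ c, Real.exp (β * Q s' c)) := by
        have := Real.log_le_log (Real.exp_pos _) h1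
        rwa [Real.log_exp] at this
      have h3 := mul_le_mul_of_nonneg_left h2 (le_of_lt (one_div_pos.mpr hβ))
      have h4 : (1 / β) * (β * (-M)) = -M := by
        rw [one_div, inv_mul_cancel_left₀ hβ.ne']
      rw [h4] at h3
      linarith
    · have h1 : ∑ c, Real.exp (β * Q s' c) ≤ (Fintype.card A : ℝ) * Real.exp (β * M) := by
        calc ∑ c, Real.exp (β * Q s' c) ≤ ∑ _c : A, Real.exp (β * M) := by
              apply Finset.sum_le_sum
              intro c _
              apply Real.exp_le_exp.mpr
              have := (abs_le.mp (hQ s' c)).2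
              nlinarith
          _ = (Fintype.card A : ℝ) * Real.exp (β * M) := by
              simp [Finset.sum_const, nsmul_eq_mul]
      have hcard : (0:ℝ) < (Fintype.card A : ℝ) := by exact_mod_cast Fintype.card_pos
      have h2 : Real.log (∑ c, Real.exp (β * Q s' c)) ≤ L + β * M := by
        have := Real.log_le_log hpos h1
        rwa [Real.log_mul hcard.ne' (Real.exp_pos _).ne', Real.log_exp] at this
      have h3 := mul_le_mul_of_nonneg_left h2 (le_of_lt (one_div_pos.mpr hβ))
      have h4 : (1 / β) * (L + β * M) = L / β + M := by
        rw [one_div, mul_add, inv_mul_cancel_left₀ hβ.ne', inv_mul_eq_div]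
      rw [h4] at h3
      linarith
  -- the TD error and its bound
  set δ : S → A → S → ℝ := fun s a s' =>
    r s a s' + γ * ((1 / β) * Real.log (∑ c, Real.exp (β * Q s' c))) - Q s a with hδdef
  have hbd : 1 + γ * (M + L / β) + M ≤ B := by
    rw [hBdef, le_div_iff₀ (mul_pos hβ h1γ)]
    have hne : (β * (1 - γ)) ≠ 0 := (mul_pos hβ h1γ).ne'
    have hMeq : M * (β * (1 - γ)) = β + γ * L := by
      have hM2 : M = (β + γ * L) / (β * (1 - γ)) := by
        rw [hMdef]; field_simp
      rw [hM2, div_mul_cancel₀ _ hne]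
    have hLβ : L / β * β = L := div_mul_cancel₀ L hβ.ne'
    nlinarith [mul_nonneg hγ0 hL0, mul_nonneg (mul_nonneg hγ0 hγ0) hL0,
      mul_le_mul_of_nonneg_left hγ1.le (mul_nonneg hγ0 hL0)]
  have hB0 : 0 ≤ B := by
    have hLβ0 : 0 ≤ L / β := div_nonneg hL0 hβ.le
    nlinarith [mul_nonneg hγ0 (add_nonneg hM0 hLβ0)]
  have hδb : ∀ s a s', |δ s a s'| ≤ B := by
    intro s a s'
    have h1 := abs_le.mp (hhb s')
    have h2 := abs_le.mp (hQ s a)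
    have h3 := abs_le.mp (hr s a s')
    have h4 := mul_le_mul_of_nonneg_left h1.2 hγ0
    have h5 := mul_le_mul_of_nonneg_left h1.1 hγ0
    rw [hδdef]
    rw [abs_le]
    constructor <;> simp only <;> nlinarith
  -- expected TD error
  set D : S → A → ℝ := fun u b => ∑ s', P u b s' * δ u b s' with hDdef
  have hDw : ∀ u b, (∑ s'', P u b s'' * r u b s'')
      + γ * ∑ s'', P u b s'' * ((1 / β) * Real.log (∑ c, Real.exp (β * Q s'' c)))
      - Q u b = D u b := by
    intro u b
    rw [hDdef]
    simp only [hδdef]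
    have e : ∀ s' : S, P u b s' *
        (r u b s' + γ * ((1 / β) * Real.log (∑ c, Real.exp (β * Q s' c))) - Q u b)
        = P u b s' * r u b s'
          + γ * (P u b s' * ((1 / β) * Real.log (∑ c, Real.exp (β * Q s' c))))
          - P u b s' * Q u b := by intro s'; ring
    simp_rw [e]
    rw [Finset.sum_sub_distrib, Finset.sum_add_distrib, ← Finset.mul_sum, ← Finset.sum_mul,
      hP1, one_mul]
  set c : ℝ := ∑ p : S × A, x p * (d p.1 p.2 * D p.1 p.2) with hcdef
  have hwx : ∀ s a s', ∀ p : S × A, x p * w s a s' p.1 p.2 =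
      (if p = (s, a) then x (s, a) * δ s a s' else 0) - x p * (d p.1 p.2 * D p.1 p.2) := by
    intro s a s' p
    rw [hw, ← hDw p.1 p.2, Prod.mk.eta]
    by_cases hp : p = (s, a)
    · subst hp
      rw [if_pos rfl, if_pos rfl]
      simp only [hδdef]
      ring
    · rw [if_neg hp, if_neg hp]
      ring
  have hsw : ∀ s a s', (∑ p : S × A, x p * w s a s' p.1 p.2) = x (s, a) * δ s a s' - c := by
    intro s a s'
    simp_rw [hwx s a s']
    rw [Finset.sum_sub_distrib,
      Finset.sum_ite_eq' Finset.univ (s, a) (fun _ => x (s, a) * δ s a s')]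
    simp [hcdef]
  have hS0 : ∑ s, ∑ a, ∑ s', d s a * P s a s' = 1 := by
    have e : ∀ s a, ∑ s', d s a * P s a s' = d s a := by
      intro s a; rw [← Finset.mul_sum, hP1, mul_one]
    simp_rw [e]
    rw [Fintype.sum_prod_type] at hd1
    exact hd1
  have hS1 : ∑ s, ∑ a, ∑ s', d s a * P s a s' * (x (s, a) * δ s a s') = c := by
    have e : ∀ s a, ∑ s', d s a * P s a s' * (x (s, a) * δ s a s')
        = x (s, a) * (d s a * D s a) := by
      intro s a
      rw [hDdef]
      simp only
      rw [Finset.mul_sum, Finset.mul_sum]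
      apply Finset.sum_congr rfl
      intro s' _
      ring
    simp_rw [e]
    rw [hcdef, Fintype.sum_prod_type]
  have key : (∑ s, ∑ a, ∑ s', d s a * P s a s' * (∑ p : S × A, x p * w s a s' p.1 p.2) ^ 2)
      = (∑ s, ∑ a, ∑ s', d s a * P s a s' * (x (s, a) * δ s a s') ^ 2) - c ^ 2 := by
    simp_rw [hsw]
    have e : ∀ s a s', d s a * P s a s' * (x (s, a) * δ s a s' - c) ^ 2
        = d s a * P s a s' * (x (s, a) * δ s a s') ^ 2
          - 2 * c * (d s a * P s a s' * (x (s, a) * δ s a s'))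
          + c ^ 2 * (d s a * P s a s') := by intro s a s'; ring
    simp_rw [e]
    rw [show (∑ s, ∑ a, ∑ s', (d s a * P s a s' * (x (s, a) * δ s a s') ^ 2
          - 2 * c * (d s a * P s a s' * (x (s, a) * δ s a s'))
          + c ^ 2 * (d s a * P s a s')))
        = (∑ s, ∑ a, ∑ s', d s a * P s a s' * (x (s, a) * δ s a s') ^ 2)
          - 2 * c * (∑ s, ∑ a, ∑ s', d s a * P s a s' * (x (s, a) * δ s a s'))
          + c ^ 2 * (∑ s, ∑ a, ∑ s', d s a * P s a s') from by
      simp only [Finset.sum_add_distrib, Finset.sum_sub_distrib, ← Finset.mul_sum]]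
    rw [hS0, hS1]
    ring
  have hd_le : ∀ s a, d s a ≤ 1 := by
    intro s a
    rw [← hd1]
    exact Finset.single_le_sum (f := fun p : S × A => d p.1 p.2)
      (fun p _ => hd0 p.1 p.2) (Finset.mem_univ (s, a))
  have hT : (∑ s, ∑ a, ∑ s', d s a * P s a s' * (x (s, a) * δ s a s') ^ 2)
      ≤ B ^ 2 * ∑ p : S × A, (x p) ^ 2 := by
    calc (∑ s, ∑ a, ∑ s', d s a * P s a s' * (x (s, a) * δ s a s') ^ 2)
        ≤ ∑ s, ∑ a, ∑ s', d s a * P s a s' * ((x (s, a)) ^ 2 * B ^ 2) := by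
          apply Finset.sum_le_sum; intro s _
          apply Finset.sum_le_sum; intro a _
          apply Finset.sum_le_sum; intro s' _
          have h1 : (δ s a s') ^ 2 ≤ B ^ 2 := by
            rw [← sq_abs]
            exact pow_le_pow_left₀ (abs_nonneg _) (hδb s a s') 2
          calc d s a * P s a s' * (x (s, a) * δ s a s') ^ 2
              = d s a * P s a s' * ((x (s, a)) ^ 2 * (δ s a s') ^ 2) := by ring
            _ ≤ d s a * P s a s' * ((x (s, a)) ^ 2 * B ^ 2) := by
                apply mul_le_mul_of_nonneg_left _ (mul_nonneg (hd0 s a) (hP0 s a s'))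
                exact mul_le_mul_of_nonneg_left h1 (sq_nonneg _)
      _ = B ^ 2 * ∑ s, ∑ a, d s a * (x (s, a)) ^ 2 := by
          have e : ∀ s a, ∑ s', d s a * P s a s' * ((x (s, a)) ^ 2 * B ^ 2)
              = B ^ 2 * (d s a * (x (s, a)) ^ 2) := by
            intro s a
            rw [show (∑ s', d s a * P s a s' * ((x (s, a)) ^ 2 * B ^ 2))
                = (∑ s', P s a s') * (d s a * ((x (s, a)) ^ 2 * B ^ 2)) from by
              rw [Finset.sum_mul]; apply Finset.sum_congr rfl; intros; ring]
            rw [hP1]; ring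
          simp_rw [e]
          simp_rw [← Finset.mul_sum]
      _ ≤ B ^ 2 * ∑ s, ∑ a, (x (s, a)) ^ 2 := by
          apply mul_le_mul_of_nonneg_left _ (sq_nonneg B)
          apply Finset.sum_le_sum; intro s _
          apply Finset.sum_le_sum; intro a _
          nlinarith [hd_le s a, hd0 s a, sq_nonneg (x (s, a))]
      _ = B ^ 2 * ∑ p : S × A, (x p) ^ 2 := by rw [Fintype.sum_prod_type]
  have hB2 : B ^ 2 ≤ 6 * (L + β) ^ 2 / (β ^ 2 * (1 - γ) ^ 2) := by
    rw [hBdef, div_pow, div_le_div_iff₀ (by positivity) (by positivity)]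
    nlinarith [sq_nonneg (L + β), sq_nonneg (β * (1 - γ)), mul_nonneg (sq_nonneg (L + β)) (sq_nonneg (β * (1 - γ)))]
  have hsum_nonneg : 0 ≤ ∑ p : S × A, (x p) ^ 2 :=
    Finset.sum_nonneg fun p _ => sq_nonneg _
  rw [key]
  have h6 := mul_le_mul_of_nonneg_right hB2 hsum_nonneg
  have h7 := sq_nonneg c
  linarith
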